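/- Let B be an invertible real 2×2 matrix, J := det B, a ∈ ℝ², and F(x) := Bx + a. Let τ̂ : ℝ² → 𝕊 be a differentiable matrix field and let τ be its re-scaled contravariant Piola–Kirchhoff transform, determined by J²·τ(F(x)) = B τ̂(x) Bᵀ. Then the row-wise divergences satisfy J²·(div τ)(F(x)) = B·(div τ̂)(x) for all x ∈ ℝ². -/

import Mathlib

open Matrix

noncomputable section

/-- Row-wise divergence of a matrix field: `(div τ)_k = ∂₁ τ_{k1} + ∂₂ τ_{k2}`. -/
def matDiv (τ : (Fin 2 → ℝ) → Matrix (Fin 2) (Fin 2) ℝ) (y : Fin 2 → ℝ) : Fin 2 → ℝ :=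
  fun k => ∑ j : Fin 2, fderiv ℝ (fun z => τ z k j) y (Pi.single j 1)

/-- Transformation of the row-wise divergence under the re-scaled contravariant
Piola–Kirchhoff transform `(det B)² τ(Bx + a) = B τ̂(x) Bᵀ`:
`(det B)² (div τ)(Bx + a) = B (div τ̂)(x)`. -/
theorem piola_kirchhoff_div_transform
    (B : Matrix (Fin 2) (Fin 2) ℝ) (hB : IsUnit B.det) (a : Fin 2 → ℝ)
    (τhat τ : (Fin 2 → ℝ) → Matrix (Fin 2) (Fin 2) ℝ)
    (hsym : ∀ y, (τhat y)ᵀ = τhat y)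
    (hdiff : ∀ k l : Fin 2, Differentiable ℝ fun y => τhat y k l)
    (hτ : ∀ y, (B.det ^ 2) • τ (B.mulVec y + a) = B * τhat y * Bᵀ) :
    ∀ y, (B.det ^ 2) • matDiv τ (B.mulVec y + a) = B.mulVec (matDiv τhat y) := by
  intro y
  have hdet : (B.det : ℝ) ≠ 0 := hB.ne_zero
  have hdet2 : (B.det ^ 2 : ℝ) ≠ 0 := pow_ne_zero 2 hdet
  set C := B⁻¹ with hCdef
  have hCB : C * B = 1 := nonsing_inv_mul B hB
  set g : (Fin 2 → ℝ) → (Fin 2 → ℝ) := fun z => C.mulVec (z - a) with hgdef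
  have hginv : ∀ z, B.mulVec (g z) + a = z := by
    intro z
    simp only [hgdef, hCdef, Matrix.mulVec_mulVec, Matrix.mul_nonsing_inv B hB, Matrix.one_mulVec]
    abel
  have hgy : g (B.mulVec y + a) = y := by
    simp only [hgdef, add_sub_cancel_right, Matrix.mulVec_mulVec, hCB, Matrix.one_mulVec]
  have hτ' : ∀ z k l, τ z k l =
      (B.det ^ 2)⁻¹ * ∑ q, (∑ p, B k p * τhat (g z) p q) * Bᵀ q l := by
    intro z k l
    have h1 := hτ (g z)
    rw [hginv z] at h1
    have h2 : τ z k l = ((B.det ^ 2)⁻¹ • (B * τhat (g z) * Bᵀ)) k l := by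
      rw [← h1, smul_smul, inv_mul_cancel₀ hdet2, one_smul]
    simpa [Matrix.smul_apply, Matrix.mul_apply] using h2
  -- the derivative of g
  set L : (Fin 2 → ℝ) →L[ℝ] (Fin 2 → ℝ) := LinearMap.toContinuousLinearMap C.mulVecLin with hL
  have hLapp : ∀ v, L v = C.mulVec v := fun v => rfl
  have hgderiv : ∀ z, HasFDerivAt g L z := by
    intro z
    have h1 : HasFDerivAt (fun z : Fin 2 → ℝ => z - a) (ContinuousLinearMap.id ℝ _) z :=
      (hasFDerivAt_id z).sub_const a
    have h2 := (L.hasFDerivAt (x := z - a)).comp z h1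
    simpa [hgdef, Function.comp, hLapp] using h2
  -- derivative of entries of τ
  have key : ∀ (k j : Fin 2) (z : Fin 2 → ℝ), HasFDerivAt (fun z => τ z k j)
      ((B.det ^ 2)⁻¹ • ∑ q : Fin 2, Bᵀ q j • ∑ p : Fin 2,
        B k p • ((fderiv ℝ (fun w => τhat w p q) (g z)).comp L)) z := by
    intro k j z
    have hcomp : ∀ p q : Fin 2, HasFDerivAt (fun z => τhat (g z) p q)
        ((fderiv ℝ (fun w => τhat w p q) (g z)).comp L) z :=
      fun p q => ((hdiff p q).differentiableAt.hasFDerivAt).comp z (hgderiv z)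
    have h3 : HasFDerivAt (fun z => (B.det ^ 2)⁻¹ *
        ∑ q, (∑ p, B k p * τhat (g z) p q) * Bᵀ q j)
        ((B.det ^ 2)⁻¹ • ∑ q : Fin 2, Bᵀ q j • ∑ p : Fin 2,
          B k p • ((fderiv ℝ (fun w => τhat w p q) (g z)).comp L)) z := by
      refine HasFDerivAt.const_mul ?_ _
      refine HasFDerivAt.fun_sum fun q _ => ?_
      refine HasFDerivAt.mul_const ?_ _
      exact HasFDerivAt.fun_sum fun p _ => (hcomp p q).const_mul _
    have heq : (fun z => τ z k j) = fun z => (B.det ^ 2)⁻¹ *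
        ∑ q, (∑ p, B k p * τhat (g z) p q) * Bᵀ q j := funext fun z => hτ' z k j
    rw [heq]
    exact h3
  -- abbreviation for partial derivatives of τhat at y
  set D : Fin 2 → Fin 2 → Fin 2 → ℝ :=
    fun p q i => fderiv ℝ (fun w => τhat w p q) y (Pi.single i 1) with hD
  have hDapp : ∀ (p q : Fin 2) (v : Fin 2 → ℝ),
      fderiv ℝ (fun w => τhat w p q) y v = ∑ i : Fin 2, v i * D p q i := by
    intro p q v
    have hv : v = ∑ i : Fin 2, v i • (Pi.single i 1 : Fin 2 → ℝ) := by
      funext i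
      simp [Pi.single_apply, Finset.sum_ite_eq, mul_comm]
    conv_lhs => rw [hv]
    rw [map_sum]
    simp [hD, smul_eq_mul]
  -- compute matDiv τ
  have hmd : ∀ k : Fin 2, matDiv τ (B.mulVec y + a) k =
      (B.det ^ 2)⁻¹ * ∑ j : Fin 2, ∑ q : Fin 2, Bᵀ q j * ∑ p : Fin 2,
        B k p * ∑ i : Fin 2, C i j * D p q i := by
    intro k
    unfold matDiv
    rw [Finset.mul_sum]
    refine Finset.sum_congr rfl fun j _ => ?_
    rw [(key k j _).fderiv]
    simp only [ContinuousLinearMap.smul_apply, ContinuousLinearMap.sum_apply,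
      ContinuousLinearMap.coe_smul', Pi.smul_apply, ContinuousLinearMap.coe_comp',
      Function.comp_apply, hgy, smul_eq_mul]
    congr 1
    refine Finset.sum_congr rfl fun q _ => ?_
    congr 1
    refine Finset.sum_congr rfl fun p _ => ?_
    congr 1
    rw [hLapp]
    rw [show C.mulVec (Pi.single j 1) = fun i => C i j * 1 from Matrix.mulVec_single C j 1]
    rw [hDapp]
    simp [mul_comm]
  -- now finish
  funext k
  have hmdhat : matDiv τhat y = fun p => ∑ q : Fin 2, D p q q := by
    funext p
    unfold matDiv
    rfl
  rw [Pi.smul_apply, hmd k, smul_eq_mul, ← mul_assoc, mul_inv_cancel₀ hdet2, one_mul,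
    hmdhat, Matrix.mulVec, dotProduct]
  -- scalar identity
  have hCBe : ∀ i q : Fin 2, ∑ j : Fin 2, C i j * B j q = (1 : Matrix (Fin 2) (Fin 2) ℝ) i q := by
    intro i q
    rw [← hCB, Matrix.mul_apply]
  have e00 := hCBe 0 0; have e01 := hCBe 0 1; have e10 := hCBe 1 0; have e11 := hCBe 1 1
  simp only [Fin.sum_univ_two, Matrix.one_apply, Matrix.transpose_apply] at e00 e01 e10 e11 ⊢
  norm_num at e00 e01 e10 e11
  linear_combination (B k 0 * D 0 0 0 + B k 1 * D 1 0 0) * e00 + (B k 0 * D 0 1 0 + B k 1 * D 1 1 0) * e01 + (B k 0 * D 0 0 1 + B k 1 * D 1 0 1) * e10 + (B k 0 * D 0 1 1 + B k 1 * D 1 1 1) * e11
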